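/- Let K̂_n (n ≥ 4) be the complete graph K_n with one edge subdivided. Then the difference index of K̂_n equals n − 1. -/

import Mathlib

open SimpleGraph

/-- `K̂ n`: the complete graph on `Fin n` with the edge between vertices `0` and `1`
subdivided by the new vertex `Sum.inr ()`. -/
def hatK (n : ℕ) : SimpleGraph (Fin n ⊕ Unit) :=
  SimpleGraph.fromRel (fun a b =>
    match a, b with
    | Sum.inl i, Sum.inl j => ¬(((i : ℕ) = 0 ∧ (j : ℕ) = 1) ∨ ((i : ℕ) = 1 ∧ (j : ℕ) = 0))
    | Sum.inl i, Sum.inr _ => (i : ℕ) = 0 ∨ (i : ℕ) = 1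
    | Sum.inr _, Sum.inl j => (j : ℕ) = 0 ∨ (j : ℕ) = 1
    | Sum.inr _, Sum.inr _ => False)

/-- The difference index of a finite simple graph. -/
noncomputable def diffIndex {V : Type*} [Fintype V] (G : SimpleGraph V) : ℕ :=
  sInf {n | ∃ f : V → ℤ, Function.Injective f ∧
    {s : ℤ | ∃ u v, G.Adj u v ∧ s = |f u - f v|}.ncard = n}

lemma hatK_adj_inl_inl {n : ℕ} {i j : Fin n} : (hatK n).Adj (Sum.inl i) (Sum.inl j) ↔
    i ≠ j ∧ ¬(((i : ℕ) = 0 ∧ (j : ℕ) = 1) ∨ ((i : ℕ) = 1 ∧ (j : ℕ) = 0)) := by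
  simp only [hatK, fromRel_adj]
  constructor
  · rintro ⟨h1, h2⟩
    refine ⟨fun h => h1 (by rw [h]), ?_⟩
    rcases h2 with h | h <;> tauto
  · rintro ⟨h1, h2⟩
    exact ⟨fun h => h1 (Sum.inl.inj h), Or.inl h2⟩

lemma hatK_adj_inl_inr {n : ℕ} {i : Fin n} {u : Unit} : (hatK n).Adj (Sum.inl i) (Sum.inr u) ↔
    ((i : ℕ) = 0 ∨ (i : ℕ) = 1) := by
  simp only [hatK, fromRel_adj]
  constructor
  · rintro ⟨h1, h2 | h2⟩ <;> exact h2
  · rintro h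
    exact ⟨by simp, Or.inl h⟩

lemma hatK_not_adj_inr_inr {n : ℕ} {u v : Unit} : ¬ (hatK n).Adj (Sum.inr u) (Sum.inr v) := by
  simp [hatK, fromRel_adj]

/-- Finiteness of the difference set. -/
lemma diffSet_finite {n : ℕ} (f : Fin n ⊕ Unit → ℤ) :
    {s : ℤ | ∃ u v, (hatK n).Adj u v ∧ s = |f u - f v|}.Finite := by
  apply Set.Finite.subset (Set.finite_range (fun p : (Fin n ⊕ Unit) × (Fin n ⊕ Unit) => |f p.1 - f p.2|))
  rintro s ⟨u, v, _, rfl⟩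
  exact ⟨(u, v), rfl⟩

/-- Lower bound: any injective labelling where some `inl i` is extremal gives ≥ n-1 differences. -/
lemma lower_aux (n : ℕ) (hn : 4 ≤ n) (f : Fin n ⊕ Unit → ℤ) (hf : Function.Injective f)
    (i : Fin n)
    (hext : (∀ x, f x ≤ f (Sum.inl i)) ∨ (∀ x, f (Sum.inl i) ≤ f x)) :
    n - 1 ≤ {s : ℤ | ∃ u v, (hatK n).Adj u v ∧ s = |f u - f v|}.ncard := by
  set S := {s : ℤ | ∃ u v, (hatK n).Adj u v ∧ s = |f u - f v|} with hSdef
  have hS : S.Finite := diffSet_finite f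
  set vtx : Fin n → Fin n ⊕ Unit := fun j =>
    if ((i : ℕ) = 0 ∧ (j : ℕ) = 1) ∨ ((i : ℕ) = 1 ∧ (j : ℕ) = 0) then Sum.inr () else Sum.inl j
    with hvtx
  have hne : ∀ j : Fin n, j ≠ i → vtx j ≠ Sum.inl i := by
    intro j hj
    rw [hvtx]
    dsimp only
    split
    · exact fun h => Sum.inr_ne_inl h
    · exact fun h => hj (Sum.inl.inj h)
  have hadj : ∀ j : Fin n, j ≠ i → (hatK n).Adj (Sum.inl i) (vtx j) := by
    intro j hj
    rw [hvtx]
    dsimp only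
    split
    · rename_i h
      rw [hatK_adj_inl_inr]
      tauto
    · rename_i h
      exact hatK_adj_inl_inl.mpr ⟨fun e => hj e.symm, h⟩
  have hvinj : Function.Injective vtx := by
    intro j j' hjj
    rw [hvtx] at hjj
    dsimp only at hjj
    split at hjj <;> split at hjj
    · rename_i h1 h2
      -- both conditions hold; i can't be both 0 and 1
      have : (j : ℕ) = (j' : ℕ) := by omega
      exact Fin.ext this
    · exact absurd hjj (by simp)
    · exact absurd hjj (by simp)
    · exact Sum.inl.inj hjj
  -- key injectivity of differences against the extremal vertex
  have hkey : ∀ x y : Fin n ⊕ Unit, x ≠ Sum.inl i → y ≠ Sum.inl i →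
      |f (Sum.inl i) - f x| = |f (Sum.inl i) - f y| → x = y := by
    intro x y hx hy h
    rcases hext with hm | hm
    · have hx' : 0 < f (Sum.inl i) - f x := by
        have := hm x
        have : f x ≠ f (Sum.inl i) := fun e => hx (hf e)
        omega
      have hy' : 0 < f (Sum.inl i) - f y := by
        have := hm y
        have : f y ≠ f (Sum.inl i) := fun e => hy (hf e)
        omega
      rw [abs_of_pos hx', abs_of_pos hy'] at h
      exact hf (by omega)
    · have hx' : f (Sum.inl i) - f x < 0 := by
        have := hm x
        have : f x ≠ f (Sum.inl i) := fun e => hx (hf e)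
        omega
      have hy' : f (Sum.inl i) - f y < 0 := by
        have := hm y
        have : f y ≠ f (Sum.inl i) := fun e => hy (hf e)
        omega
      rw [abs_of_neg hx', abs_of_neg hy'] at h
      exact hf (by omega)
  have hcard : (Finset.univ.erase i).card ≤ hS.toFinset.card := by
    apply Finset.card_le_card_of_injOn (fun j => |f (Sum.inl i) - f (vtx j)|)
    · intro j hj
      rw [Finset.mem_coe, Set.Finite.mem_toFinset]
      exact ⟨Sum.inl i, vtx j, hadj j (Finset.ne_of_mem_erase hj), rfl⟩
    · intro j hj j' hj' h
      have := hkey (vtx j) (vtx j') (hne j (Finset.ne_of_mem_erase hj))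
        (hne j' (Finset.ne_of_mem_erase hj')) h
      exact hvinj this
  have h1 : (Finset.univ.erase i).card = n - 1 := by
    rw [Finset.card_erase_of_mem (Finset.mem_univ i), Finset.card_univ, Fintype.card_fin]
  rw [Set.ncard_eq_toFinset_card S hS]
  rw [h1] at hcard
  exact hcard

/-- Upper bound: an explicit labelling achieving exactly `n - 1` differences. -/
lemma upper_aux (n : ℕ) (hn : 4 ≤ n) : ∃ f : Fin n ⊕ Unit → ℤ, Function.Injective f ∧
    {s : ℤ | ∃ u v, (hatK n).Adj u v ∧ s = |f u - f v|}.ncard = n - 1 := by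
  refine ⟨Sum.elim (fun i => (i : ℤ)) (fun _ => -1), ?_, ?_⟩
  · rintro (i | u) (j | v) h
    · simp only [Sum.elim_inl] at h
      exact congrArg Sum.inl (Fin.ext (by exact_mod_cast h))
    · simp only [Sum.elim_inl, Sum.elim_inr] at h
      omega
    · simp only [Sum.elim_inl, Sum.elim_inr] at h
      omega
    · cases u; cases v; rfl
  · have hset : {s : ℤ | ∃ u v, (hatK n).Adj u v ∧
        s = |Sum.elim (fun i : Fin n => (i : ℤ)) (fun _ => -1) u
           - Sum.elim (fun i : Fin n => (i : ℤ)) (fun _ => -1) v|} = Set.Icc 1 ((n : ℤ) - 1) := by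
      ext s
      constructor
      · rintro ⟨u, v, hadj, rfl⟩
        rw [Set.mem_Icc]
        match u, v with
        | Sum.inl i, Sum.inl j =>
          rw [hatK_adj_inl_inl] at hadj
          have hi := i.isLt
          have hj := j.isLt
          have hij : (i : ℕ) ≠ (j : ℕ) := fun h => hadj.1 (Fin.ext h)
          simp only [Sum.elim_inl]
          rcases abs_cases ((i : ℤ) - (j : ℤ)) with ⟨he, _⟩ | ⟨he, _⟩ <;> omega
        | Sum.inl i, Sum.inr v =>
          rw [hatK_adj_inl_inr] at hadj
          simp only [Sum.elim_inl, Sum.elim_inr]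
          rcases abs_cases ((i : ℤ) - (-1)) with ⟨he, _⟩ | ⟨he, _⟩ <;> omega
        | Sum.inr u, Sum.inl j =>
          rw [(hatK n).adj_comm, hatK_adj_inl_inr] at hadj
          simp only [Sum.elim_inl, Sum.elim_inr]
          rcases abs_cases ((-1 : ℤ) - (j : ℤ)) with ⟨he, _⟩ | ⟨he, _⟩ <;> omega
        | Sum.inr u, Sum.inr v => exact absurd hadj hatK_not_adj_inr_inr
      · rw [Set.mem_Icc]
        rintro ⟨hs1, hs2⟩
        by_cases hs : s = 1
        · refine ⟨Sum.inl ⟨2, by omega⟩, Sum.inl ⟨1, by omega⟩, ?_, ?_⟩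
          · rw [hatK_adj_inl_inl]
            refine ⟨?_, by simp⟩
            intro h
            have := congrArg Fin.val h
            simp at this
          · simp only [Sum.elim_inl]
            norm_num [hs]
        · refine ⟨Sum.inl ⟨s.toNat, by omega⟩, Sum.inl ⟨0, by omega⟩, ?_, ?_⟩
          · rw [hatK_adj_inl_inl]
            constructor
            · intro h
              have := congrArg Fin.val h
              simp at this
              omega
            · simp only
              omega
          · simp only [Sum.elim_inl]
            have h0 : ((⟨0, by omega⟩ : Fin n) : ℤ) = 0 := rfl
            rw [h0, sub_zero, abs_of_nonneg (by omega : (0:ℤ) ≤ (Int.toNat s : ℤ))]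
            omega
    rw [hset, ← Finset.coe_Icc, Set.ncard_coe_finset, Int.card_Icc]
    omega


/-- For `n ≥ 4`, the difference index of `K̂_n` equals `n - 1`. -/
theorem stmt9 (n : ℕ) (hn : 4 ≤ n) : diffIndex (hatK n) = n - 1 := by
  unfold diffIndex
  apply le_antisymm
  · obtain ⟨f, hf, hcard⟩ := upper_aux n hn
    exact Nat.sInf_le ⟨f, hf, hcard⟩
  · obtain ⟨f₀, hf₀, hcard₀⟩ := upper_aux n hn
    apply le_csInf ⟨n - 1, Set.mem_setOf.mpr ⟨f₀, hf₀, hcard₀⟩⟩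
    rintro m ⟨f, hf, rfl⟩
    obtain ⟨c, -, hc⟩ := Finset.exists_max_image Finset.univ f ⟨Sum.inr (), Finset.mem_univ _⟩
    cases c with
    | inl i => exact lower_aux n hn f hf i (Or.inl fun x => hc x (Finset.mem_univ x))
    | inr u =>
      obtain ⟨b, -, hb⟩ := Finset.exists_min_image Finset.univ f ⟨Sum.inr (), Finset.mem_univ _⟩
      cases b with
      | inl i => exact lower_aux n hn f hf i (Or.inr fun x => hb x (Finset.mem_univ x))
      | inr v =>
        exfalso
        have hnn : 0 < n := by omega
        have h1 := hc (Sum.inl (⟨0, hnn⟩ : Fin n)) (Finset.mem_univ _)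
        have h2 := hb (Sum.inl (⟨0, hnn⟩ : Fin n)) (Finset.mem_univ _)
        have h0 : f (Sum.inl (⟨0, hnn⟩ : Fin n)) = f (Sum.inr ()) := by
          cases u; cases v; exact le_antisymm h1 h2
        exact Sum.inl_ne_inr (hf h0)
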